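/- Let $I \subset K[x_1,\dots,x_n]$ be a monomial ideal with a standard linear weighting, i.e., $I = J_w$ for a squarefree monomial ideal $J$ and standard linear weighting $w$, and let $h$ be the big-height of $I$. Then $\hat{\alpha}(I) \ge \dfrac{\alpha(I) + h - 1}{h}$. -/

import Mathlib

open MvPolynomial Finset

/-- The monomial `x^a` in `K[x_1,…,x_n]`. -/
noncomputable def mon {K : Type*} [Field K] {n : ℕ} (a : Fin n → ℕ) :
    MvPolynomial (Fin n) K :=
  MvPolynomial.monomial (Finsupp.equivFunOnFinite.symm a) 1

/-- `α(L)`: the least total degree of a nonzero monomial of `L`. -/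
noncomputable def alphaI {K σ : Type*} [Field K] (L : Ideal (MvPolynomial σ K)) : ℕ :=
  sInf {d : ℕ | ∃ m : σ →₀ ℕ, (m.sum fun _ e => e) = d ∧ MvPolynomial.monomial m (1 : K) ∈ L}

/-- The weighted ideal `I_w`, generated by `x^{w(a)}` for monomials `x^a ∈ I`. -/
noncomputable def wIdeal {K : Type*} [Field K] {n : ℕ} (w : Fin n → ℕ)
    (I : Ideal (MvPolynomial (Fin n) K)) : Ideal (MvPolynomial (Fin n) K) :=
  Ideal.span {f | ∃ a : Fin n → ℕ, mon (K := K) a ∈ I ∧ f = mon (K := K) (fun i => w i * a i)}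

/-- The irreducible monomial ideal `⟨x_i^{w i} : i ∈ A⟩`. -/
noncomputable def qIdeal {K : Type*} [Field K] {n : ℕ} (A : Finset (Fin n)) (w : Fin n → ℕ) :
    Ideal (MvPolynomial (Fin n) K) :=
  Ideal.span ((fun i => (X i : MvPolynomial (Fin n) K) ^ w i) '' ↑A)

/-- `I` is a monomial ideal. -/
def IsMonomialIdeal {K : Type*} [Field K] {n : ℕ} (I : Ideal (MvPolynomial (Fin n) K)) : Prop :=
  ∃ S : Set (Fin n → ℕ), I = Ideal.span ((mon (K := K)) '' S)

/-- The `s`-th symbolic power `I^{(s)} = ⋂_{p ∈ Ass(I)} (I^s R_p ∩ R)`. -/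
noncomputable def symbPow {R : Type*} [CommRing R] (I : Ideal R) (s : ℕ) : Ideal R :=
  ⨅ p : {p : Ideal R // p ∈ associatedPrimes R (R ⧸ I)},
    letI : p.1.IsPrime := p.2.isPrime
    Ideal.comap (algebraMap R (Localization.AtPrime p.1))
      (Ideal.map (algebraMap R (Localization.AtPrime p.1)) (I ^ s))



noncomputable def mIdeal {K : Type*} [Field K] {n : ℕ} (A : Finset (Fin n)) (w : Fin n → ℕ)
    (s : ℕ) : Ideal (MvPolynomial (Fin n) K) :=
  Ideal.span ((fun μ : Fin n →₀ ℕ => MvPolynomial.monomial μ (1 : K)) ''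
    {μ | s ≤ ∑ i ∈ A, μ i / w i})

lemma qIdeal_le_mIdeal {K : Type*} [Field K] {n : ℕ} (A : Finset (Fin n)) (w : Fin n → ℕ)
    (hw : ∀ i, 0 < w i) : qIdeal (K := K) A w ≤ mIdeal A w 1 := by
  rw [qIdeal, Ideal.span_le]
  rintro f ⟨i, hi, rfl⟩
  dsimp only
  rw [X_pow_eq_monomial]
  apply Ideal.subset_span
  refine ⟨Finsupp.single i (w i), ?_, rfl⟩
  simp only [Set.mem_setOf_eq]
  rw [Finset.sum_eq_single i]
  · simp [Nat.div_self (hw i)]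
  · intro k _ hki
    rw [Finsupp.single_eq_of_ne' (Ne.symm hki), Nat.zero_div]
  · intro hni; exact absurd (Finset.mem_coe.mp hi) hni

lemma mIdeal_mul {K : Type*} [Field K] {n : ℕ} (A : Finset (Fin n)) (w : Fin n → ℕ) (a b : ℕ) :
    mIdeal (K := K) A w a * mIdeal A w b ≤ mIdeal A w (a + b) := by
  rw [mIdeal, mIdeal, Ideal.span_mul_span', Ideal.span_le]
  rintro f hf
  rw [Set.mem_mul] at hf
  obtain ⟨f1, ⟨μ, hμ, rfl⟩, f2, ⟨ν, hν, rfl⟩, rfl⟩ := hf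
  rw [monomial_mul, one_mul]
  apply Ideal.subset_span
  refine ⟨μ + ν, ?_, rfl⟩
  simp only [Set.mem_setOf_eq] at *
  calc a + b ≤ ∑ i ∈ A, μ i / w i + ∑ i ∈ A, ν i / w i := Nat.add_le_add hμ hν
    _ = ∑ i ∈ A, (μ i / w i + ν i / w i) := Finset.sum_add_distrib.symm
    _ ≤ ∑ i ∈ A, (μ i + ν i) / w i := Finset.sum_le_sum fun i _ => Nat.add_div_le_add_div _ _ _
    _ = ∑ i ∈ A, (μ + ν) i / w i := by simp [Finsupp.add_apply]

lemma qIdeal_pow_le {K : Type*} [Field K] {n : ℕ} (A : Finset (Fin n)) (w : Fin n → ℕ)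
    (hw : ∀ i, 0 < w i) (s : ℕ) : (qIdeal (K := K) A w) ^ s ≤ mIdeal A w s := by
  induction s with
  | zero =>
      have : mIdeal (K := K) A w 0 = ⊤ := by
        rw [Ideal.eq_top_iff_one]
        have h1 : (MvPolynomial.monomial (0 : Fin n →₀ ℕ) (1 : K)) ∈ mIdeal A w 0 :=
          Ideal.subset_span ⟨0, by simp, rfl⟩
        simpa using h1
      rw [this]; exact le_top
  | succ s ih =>
      rw [pow_succ]
      exact le_trans (Ideal.mul_mono ih (qIdeal_le_mIdeal A w hw)) (mIdeal_mul A w s 1)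

lemma sum_div_ge_of_mem_pow {K : Type*} [Field K] {n : ℕ} (A : Finset (Fin n)) (w : Fin n → ℕ)
    (hw : ∀ i, 0 < w i) (m : Fin n →₀ ℕ) (s : ℕ)
    (hm : MvPolynomial.monomial m (1 : K) ∈ (qIdeal (K := K) A w) ^ s) :
    s ≤ ∑ i ∈ A, m i / w i := by
  have h2 := qIdeal_pow_le A w hw s hm
  rw [mIdeal, mem_ideal_span_monomial_image] at h2
  obtain ⟨ν, hν, hle⟩ := h2 m (by simp [MvPolynomial.mem_support_iff, MvPolynomial.coeff_monomial])
  calc s ≤ ∑ i ∈ A, ν i / w i := hν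
    _ ≤ ∑ i ∈ A, m i / w i := Finset.sum_le_sum fun i _ => Nat.div_le_div_right (hle i)

lemma monomial_mem_of_le {K : Type*} [Field K] {n : ℕ} {m μ : Fin n →₀ ℕ} (hle : μ ≤ m)
    {J : Ideal (MvPolynomial (Fin n) K)} (hμ : MvPolynomial.monomial μ (1 : K) ∈ J) :
    MvPolynomial.monomial m (1 : K) ∈ J := by
  have he : MvPolynomial.monomial m (1 : K)
      = MvPolynomial.monomial μ 1 * MvPolynomial.monomial (m - μ) 1 := by
    rw [monomial_mul, one_mul, add_tsub_cancel_of_le hle]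
  rw [he]; exact Ideal.mul_mem_right _ _ hμ


lemma coreLP {n : ℕ} (w : Fin n → ℕ) (hw : ∀ i, 0 < w i) (h : ℕ) (hh : 1 ≤ h)
    (E : Finset (Finset (Fin n))) :
    ∀ (_ : E.Nonempty) (_ : ∀ B ∈ E, B.card ≤ h) (y : Fin n → ℝ) (_ : ∀ i, 0 ≤ y i)
    (_ : ∀ B ∈ E, 1 ≤ ∑ i ∈ B, y i) (τ : ℝ)
    (_ : ∀ T : Finset (Fin n), (∀ B ∈ E, (B ∩ T).Nonempty) → τ ≤ ∑ i ∈ T, (w i : ℝ)),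
    (τ + h - 1) / h ≤ ∑ i, (w i : ℝ) * y i := by
  induction E using Finset.strongInduction with
  | _ E IH =>
  intro hE hsize y hy hfeas τ hτ
  have hh0 : (0 : ℝ) < h := by exact_mod_cast Nat.lt_of_lt_of_le Nat.zero_lt_one hh
  obtain ⟨B, hB⟩ := hE
  have hBne : B.Nonempty := by
    rcases B.eq_empty_or_nonempty with hB0 | hB0
    · exfalso; have := hfeas B hB; rw [hB0] at this; simp at this; linarith
    · exact hB0
  obtain ⟨v, hvB, hv⟩ : ∃ v ∈ B, 1 / (h : ℝ) ≤ y v := by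
    by_contra hcon; push_neg at hcon
    have h1 : ∑ i ∈ B, y i < ∑ _i ∈ B, (1 / (h : ℝ)) :=
      Finset.sum_lt_sum_of_nonempty hBne hcon
    rw [Finset.sum_const, nsmul_eq_mul, mul_one_div] at h1
    have h2 : (B.card : ℝ) / h ≤ 1 := by
      rw [div_le_one hh0]; exact_mod_cast hsize B hB
    exact absurd (hfeas B hB) (not_le.mpr (lt_of_lt_of_le h1 h2))
  have hwv0 : (0 : ℝ) ≤ (w v : ℝ) := Nat.cast_nonneg _
  have hwv1 : (1 : ℝ) ≤ (w v : ℝ) := by exact_mod_cast hw v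
  set E' := E.filter (fun C => v ∉ C) with hE'def
  by_cases hne : E'.Nonempty
  · -- recursive case
    have hEsub : E' ⊂ E := by
      refine Finset.filter_ssubset.mpr ⟨B, hB, ?_⟩
      simp [hvB]
    set F : Fin n → ℝ := fun i => (w i : ℝ) * y i with hF
    set y' := Function.update y v 0 with hy'
    have hupd : (fun i => (w i : ℝ) * y' i) = Function.update F v 0 := by
      funext i
      by_cases hi : i = v
      · subst hi; simp [hy', hF]
      · simp [hy', hF, Function.update_of_ne hi]
    have hsum' : ∑ i, (w i : ℝ) * y' i = ∑ i, F i - F v := by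
      rw [hupd, Finset.sum_update_of_mem (Finset.mem_univ v)]
      rw [Finset.sum_eq_sum_sdiff_singleton_add (Finset.mem_univ v) F]
      ring
    have key := IH E' hEsub hne
      (fun C hC => hsize C (Finset.mem_of_mem_filter C hC))
      y'
      (fun i => by
        by_cases hi : i = v
        · subst hi; simp [hy']
        · simpa [hy', Function.update_of_ne hi] using hy i)
      (fun C hC => by
        have hvC : v ∉ C := (Finset.mem_filter.mp hC).2
        have : ∑ i ∈ C, y' i = ∑ i ∈ C, y i :=
          Finset.sum_congr rfl fun i hi =>
            Function.update_of_ne (by rintro rfl; exact hvC hi) _ _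
        rw [this]; exact hfeas C (Finset.mem_filter.mp hC).1)
      (τ - (w v : ℝ))
      (fun T hT => by
        have hcov : ∀ C ∈ E, (C ∩ insert v T).Nonempty := by
          intro C hC
          by_cases hvC : v ∈ C
          · exact ⟨v, Finset.mem_inter.mpr ⟨hvC, Finset.mem_insert_self v T⟩⟩
          · obtain ⟨u, hu⟩ := hT C (Finset.mem_filter.mpr ⟨hC, hvC⟩)
            rw [Finset.mem_inter] at hu
            exact ⟨u, Finset.mem_inter.mpr ⟨hu.1, Finset.mem_insert_of_mem hu.2⟩⟩
        have h1 := hτ (insert v T) hcov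
        have h2 : ∑ i ∈ insert v T, (w i : ℝ) ≤ (w v : ℝ) + ∑ i ∈ T, (w i : ℝ) := by
          by_cases hvT : v ∈ T
          · rw [Finset.insert_eq_self.mpr hvT]; linarith
          · rw [Finset.sum_insert hvT]
        linarith)
    have hvy : (w v : ℝ) / h ≤ (w v : ℝ) * y v := by
      calc (w v : ℝ) / h = (w v : ℝ) * (1 / h) := by ring
        _ ≤ (w v : ℝ) * y v := mul_le_mul_of_nonneg_left hv hwv0
    have hid : (τ - (w v : ℝ) + h - 1) / h + (w v : ℝ) / h = (τ + h - 1) / h := by ring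
    have : F v = (w v : ℝ) * y v := rfl
    rw [hsum'] at key
    linarith
  · -- base case: every edge contains v
    have hallv : ∀ C ∈ E, v ∈ C := by
      intro C hC
      by_contra hvC
      exact hne ⟨C, Finset.mem_filter.mpr ⟨hC, hvC⟩⟩
    have hτv : τ ≤ (w v : ℝ) := by
      have := hτ {v} (fun C hC =>
        ⟨v, Finset.mem_inter.mpr ⟨hallv C hC, Finset.mem_singleton_self v⟩⟩)
      simpa using this
    have h1 : (1 : ℝ) ≤ ∑ i ∈ B, y i := hfeas B hB
    have h2 : ∑ i ∈ B, y i + ((w v : ℝ) - 1) * (1 / h) ≤ ∑ i ∈ B, (w i : ℝ) * y i := by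
      rw [← Finset.sum_erase_add B _ hvB, ← Finset.sum_erase_add B (fun i => (w i : ℝ) * y i) hvB]
      have t1 : ∑ i ∈ B.erase v, y i ≤ ∑ i ∈ B.erase v, (w i : ℝ) * y i :=
        Finset.sum_le_sum fun i _ =>
          le_mul_of_one_le_left (hy i) (by exact_mod_cast hw i)
      have t2 : ((w v : ℝ) - 1) * (1 / h) ≤ ((w v : ℝ) - 1) * y v :=
        mul_le_mul_of_nonneg_left hv (by linarith)
      nlinarith [t1, t2]
    have h3 : ∑ i ∈ B, (w i : ℝ) * y i ≤ ∑ i, (w i : ℝ) * y i :=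
      Finset.sum_le_sum_of_subset_of_nonneg (Finset.subset_univ B)
        (fun i _ _ => mul_nonneg (Nat.cast_nonneg _) (hy i))
    have h4 : (τ + h - 1) / h ≤ ((w v : ℝ) + h - 1) / h := by gcongr
    have h5 : ((w v : ℝ) + h - 1) / h = 1 + ((w v : ℝ) - 1) * (1 / h) := by
      field_simp
      ring
    linarith

/-- Chudnovsky-type bound. -/
theorem waldschmidt_lower_bound_weighted {K : Type*} [Field K] {n r : ℕ} (hr : 0 < r)
    (A : Fin r → Finset (Fin n)) (w : Fin n → ℕ) (hw : ∀ i, 0 < w i)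
    (hApos : ∀ j, (A j).Nonempty)
    (hnoemb : ∀ j k, A j ⊆ A k → j = k)
    (h : ℕ) (hh : h = Finset.univ.sup fun j => (A j).card)
    (I : Ideal (MvPolynomial (Fin n) K))
    (hI : I = wIdeal w (⨅ j, qIdeal (K := K) (A j) (fun _ => 1))) :
    ∀ L : ℝ,
      Filter.Tendsto (fun s : ℕ => (alphaI (⨅ j, (qIdeal (K := K) (A j) w) ^ s) : ℝ) / s)
        Filter.atTop (nhds L) →
      ((alphaI I : ℝ) + h - 1) / h ≤ L := by
  intro L hL
  have hj0 : Nonempty (Fin r) := ⟨⟨0, hr⟩⟩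
  obtain ⟨j0⟩ := hj0
  have hh1 : 1 ≤ h := by
    rw [hh]
    calc 1 ≤ (A j0).card := Finset.card_pos.mpr (hApos j0)
      _ ≤ _ := Finset.le_sup (f := fun j => (A j).card) (Finset.mem_univ j0)
  have hh0 : (0 : ℝ) < h := by exact_mod_cast Nat.lt_of_lt_of_le Nat.zero_lt_one hh1
  apply ge_of_tendsto hL
  filter_upwards [Filter.eventually_ge_atTop 1] with s hs1
  have hs0 : (0 : ℝ) < s := by exact_mod_cast hs1
  set Fs := ⨅ j, (qIdeal (K := K) (A j) w) ^ s with hFs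
  -- a witness monomial in Fs
  have hwit : ∃ m : Fin n →₀ ℕ, (m.sum fun _ e => e) = ∑ i, w i * s ∧
      MvPolynomial.monomial m (1 : K) ∈ Fs := by
    refine ⟨Finsupp.equivFunOnFinite.symm (fun i => w i * s), ?_, ?_⟩
    · rw [Finsupp.sum_fintype _ _ (fun _ => rfl)]
      simp
    · rw [hFs, Ideal.mem_iInf]
      intro j
      obtain ⟨i0, hi0⟩ := hApos j
      apply monomial_mem_of_le (μ := Finsupp.single i0 (w i0 * s))
      · rw [Finsupp.single_le_iff]
        simp
      · rw [← X_pow_eq_monomial, pow_mul]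
        refine Ideal.pow_mem_pow ?_ s
        exact Ideal.subset_span (Set.mem_image_of_mem _ (Finset.mem_coe.mpr hi0))
  -- the minimum is attained by some monomial m
  have hmem : ∃ m : Fin n →₀ ℕ, (m.sum fun _ e => e) = alphaI Fs ∧
      MvPolynomial.monomial m (1 : K) ∈ Fs := by
    have hSne : {d : ℕ | ∃ m : Fin n →₀ ℕ,
        (m.sum fun _ e => e) = d ∧ MvPolynomial.monomial m (1 : K) ∈ Fs}.Nonempty :=
      by exact ⟨_, hwit⟩
    obtain ⟨m, hm1, hm2⟩ := Nat.sInf_mem hSne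
    exact ⟨m, by rw [hm1]; rfl, hm2⟩
  obtain ⟨m, hdeg, hmemFs⟩ := hmem
  -- feasibility of the fractional cover from m
  have hfeasNat : ∀ j, s ≤ ∑ i ∈ A j, m i / w i := fun j =>
    sum_div_ge_of_mem_pow (A j) w hw m s (by
      have hm' := hmemFs
      rw [hFs] at hm'
      exact Ideal.mem_iInf.mp hm' j)
  -- lower bound on weights of vertex covers by alphaI I
  have hτ : ∀ T : Finset (Fin n), (∀ B ∈ Finset.univ.image A, (B ∩ T).Nonempty) →
      (alphaI I : ℝ) ≤ ∑ i ∈ T, (w i : ℝ) := by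
    intro T hT
    have hTj : ∀ j, ((A j) ∩ T).Nonempty := fun j =>
      hT (A j) (Finset.mem_image_of_mem A (Finset.mem_univ j))
    set a : Fin n → ℕ := fun i => if i ∈ T then 1 else 0 with ha
    have hmonJ : mon (K := K) a ∈ ⨅ j, qIdeal (K := K) (A j) (fun _ => 1) := by
      rw [Ideal.mem_iInf]
      intro j
      obtain ⟨u, hu⟩ := hTj j
      rw [Finset.mem_inter] at hu
      rw [mon]
      apply monomial_mem_of_le (μ := Finsupp.single u 1)
      · rw [Finsupp.single_le_iff]
        simp [ha, hu.2]
      · rw [← X_pow_eq_monomial]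
        exact Ideal.subset_span ⟨u, Finset.mem_coe.mpr hu.1, rfl⟩
    have hmonI : mon (K := K) (fun i => w i * a i) ∈ I := by
      rw [hI, wIdeal]
      exact Ideal.subset_span ⟨a, hmonJ, rfl⟩
    have hdeg2 : ((Finsupp.equivFunOnFinite.symm (fun i => w i * a i) : Fin n →₀ ℕ).sum
        fun _ e => e) = ∑ i ∈ T, w i := by
      rw [Finsupp.sum_fintype _ _ (fun _ => rfl)]
      simp only [Finsupp.coe_equivFunOnFinite_symm, ha]
      simp only [mul_ite, mul_one, mul_zero]
      rw [Finset.sum_ite_mem, Finset.univ_inter]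
    have hle : alphaI I ≤ ∑ i ∈ T, w i := by
      apply Nat.sInf_le
      exact ⟨_, hdeg2, hmonI⟩
    calc (alphaI I : ℝ) ≤ ((∑ i ∈ T, w i : ℕ) : ℝ) := by exact_mod_cast hle
      _ = ∑ i ∈ T, (w i : ℝ) := by push_cast; ring
  -- apply the LP lemma
  set y : Fin n → ℝ := fun i => ((m i / w i : ℕ) : ℝ) / s with hy
  have hcore := coreLP w hw h hh1 (Finset.univ.image A)
    ⟨A j0, Finset.mem_image_of_mem A (Finset.mem_univ j0)⟩
    (fun B hB => by
      obtain ⟨j, _, rfl⟩ := Finset.mem_image.mp hB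
      rw [hh]
      exact Finset.le_sup (f := fun j => (A j).card) (Finset.mem_univ j))
    y
    (fun i => div_nonneg (Nat.cast_nonneg _) hs0.le)
    (fun B hB => by
      obtain ⟨j, _, rfl⟩ := Finset.mem_image.mp hB
      rw [hy]
      rw [← Finset.sum_div, le_div_iff₀ hs0, one_mul]
      exact_mod_cast hfeasNat j)
    (alphaI I : ℝ) hτ
  -- conclude
  have hchain : ∑ i, (w i : ℝ) * y i ≤ (alphaI Fs : ℝ) / s := by
    have e1 : ∑ i, (w i : ℝ) * y i = ((∑ i, w i * (m i / w i) : ℕ) : ℝ) / s := by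
      push_cast
      rw [Finset.sum_div]
      exact Finset.sum_congr rfl fun i _ => by rw [hy]; ring
    have e2 : (∑ i, w i * (m i / w i) : ℕ) ≤ ∑ i, m i :=
      Finset.sum_le_sum fun i _ => by
        rw [mul_comm]; exact Nat.div_mul_le_self _ _
    have e3 : (∑ i, m i) = alphaI Fs := by
      rw [← hdeg, Finsupp.sum_fintype _ _ (fun _ => rfl)]
    rw [e1, ← e3]
    gcongr <;> exact_mod_cast e2
  calc ((alphaI I : ℝ) + h - 1) / h ≤ ∑ i, (w i : ℝ) * y i := hcore
    _ ≤ (alphaI Fs : ℝ) / s := hchain
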